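/- For a non-negative random variable γ_s with Gamma(s, γ̄) density f(γ) = γ^{s-1} e^{-γ/γ̄} / (γ̄^s Γ(s)) (s a positive integer, γ̄ > 0), and ψ > 0, λ ≥ 0, K a positive integer: ∫_0^∞ Q_K(√(ψγ), √λ) f(γ) dγ = (1+ψγ̄/2)^{-s} Σ_{n=0}^{∞} C(n+s-1, n) (ψγ̄/(ψγ̄+2))^n Γ(n+K, λ/2)/Γ(n+K), where Q_K(a,b) = Σ_{n=0}^{∞} ((a²/2)^n e^{-a²/2}/n!) · Γ(n+K, b²/2)/Γ(n+K). -/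

import Mathlib

/-- The upper incomplete gamma function `Γ(a, x) = ∫_x^∞ t^(a-1) e^{-t} dt`. -/
noncomputable def upperGamma (a x : ℝ) : ℝ := ∫ t in Set.Ioi x, t ^ (a - 1) * Real.exp (-t)

open MeasureTheory Real Set

lemma upperGamma_nonneg {a x : ℝ} (hx : 0 ≤ x) : 0 ≤ upperGamma a x := by
  apply setIntegral_nonneg measurableSet_Ioi
  intro t ht
  have h0 : (0:ℝ) ≤ t := le_trans hx (le_of_lt ht)
  positivity

lemma upperGamma_le_Gamma {a x : ℝ} (ha : 0 < a) (hx : 0 ≤ x) :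
    upperGamma a x ≤ Real.Gamma a := by
  have hint : IntegrableOn (fun t : ℝ => t ^ (a-1) * Real.exp (-t)) (Ioi 0) :=
    (Real.GammaIntegral_convergent ha).congr_fun (fun t _ => mul_comm _ _) measurableSet_Ioi
  rw [Real.Gamma_eq_integral ha,
    setIntegral_congr_fun measurableSet_Ioi
      (fun t _ => mul_comm (Real.exp (-t)) (t ^ (a-1)))]
  apply setIntegral_mono_set hint
  · filter_upwards [ae_restrict_mem measurableSet_Ioi] with t ht
    have h0 : (0:ℝ) ≤ t := le_of_lt ht
    positivity
  · exact HasSubset.Subset.eventuallyLE (Ioi_subset_Ioi hx)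

/-- Averaging the generalized Marcum Q-function `Q_K(√(ψγ), √λ)` (in its
Poisson-weighted incomplete-gamma series form) over a Gamma(s, γ̄) density
yields the closed form `Θ`. -/
theorem stmt10 (s : ℕ) (hs : 0 < s) (γb ψ lam : ℝ) (hγb : 0 < γb) (hψ : 0 < ψ)
    (hlam : 0 ≤ lam) (K : ℕ) (hK : 0 < K) :
    (∫ γ in Set.Ioi (0 : ℝ),
        (∑' n : ℕ, ((ψ * γ / 2) ^ n * Real.exp (-(ψ * γ / 2)) / n.factorial) *
            (upperGamma (n + K) (lam / 2) / Real.Gamma (n + K))) *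
          (γ ^ (s - 1) * Real.exp (-γ / γb) / (γb ^ s * Real.Gamma s)))
      = (1 + ψ * γb / 2) ^ (-(s : ℤ)) *
          ∑' n : ℕ, ((n + s - 1).choose n : ℝ) * (ψ * γb / (ψ * γb + 2)) ^ n *
            (upperGamma (n + K) (lam / 2) / Real.Gamma (n + K)) := by
  -- abbreviations
  have hb : (0:ℝ) < ψ/2 + 1/γb := by positivity
  set b : ℝ := ψ/2 + 1/γb with hbdef
  have hden : (0:ℝ) < ψ * γb + 2 := by positivity
  -- R n bounds
  have hGpos : ∀ n : ℕ, (0:ℝ) < Real.Gamma (n + K) := by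
    intro n
    apply Real.Gamma_pos_of_pos
    have : (0:ℝ) < (K:ℝ) := by exact_mod_cast hK
    positivity
  have hR0 : ∀ n : ℕ, 0 ≤ upperGamma (n + K) (lam/2) / Real.Gamma (n + K) := by
    intro n
    exact div_nonneg (upperGamma_nonneg (by linarith)) (hGpos n).le
  have hR1 : ∀ n : ℕ, upperGamma (n + K) (lam/2) / Real.Gamma (n + K) ≤ 1 := by
    intro n
    rw [div_le_one (hGpos n)]
    apply upperGamma_le_Gamma
    · have : (0:ℝ) < (K:ℝ) := by exact_mod_cast hK
      positivity
    · linarith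
  -- q bounds
  have hq0 : (0:ℝ) ≤ ψ * γb / (ψ * γb + 2) := by positivity
  have hq1 : ψ * γb / (ψ * γb + 2) < 1 := by
    rw [div_lt_one hden]; linarith
  -- the summand functions
  set R : ℕ → ℝ := fun n => upperGamma (n + K) (lam/2) / Real.Gamma (n + K) with hRdef
  set F : ℕ → ℝ → ℝ := fun n γ =>
    (((ψ * γ / 2) ^ n * Real.exp (-(ψ * γ / 2)) / n.factorial) * R n) *
      (γ ^ (s - 1) * Real.exp (-γ / γb) / (γb ^ s * Real.Gamma s)) with hFdef
  set c : ℕ → ℝ := fun n => (ψ/2)^n / n.factorial * R n / (γb ^ s * Real.Gamma s) with hcdef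
  have hcast : ∀ n : ℕ, ((n:ℝ) + s) - 1 = ((n + s - 1 : ℕ) : ℝ) := by
    intro n
    have h1 : (1:ℕ) ≤ n + s := by omega
    push_cast [Nat.cast_sub h1]
    ring
  have hpos : ∀ n : ℕ, (0:ℝ) < (n:ℝ) + s := by
    intro n
    have : (0:ℝ) < (s:ℝ) := by exact_mod_cast hs
    positivity
  -- pointwise identification on Ioi 0
  have hFeq : ∀ n : ℕ, ∀ γ ∈ Ioi (0:ℝ),
      c n * (γ ^ (((n:ℝ) + s) - 1) * Real.exp (-(b * γ))) = F n γ := by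
    intro n γ hγ
    have hγ0 : (0:ℝ) < γ := hγ
    have hrw : γ ^ (((n:ℝ) + s) - 1) = γ ^ (n + s - 1 : ℕ) := by
      rw [hcast n, Real.rpow_natCast]
    have hexp : Real.exp (-(b * γ)) = Real.exp (-(ψ * γ / 2)) * Real.exp (-γ / γb) := by
      rw [← Real.exp_add]
      congr 1
      rw [hbdef]
      field_simp
      ring
    have hpow : (ψ * γ / 2) ^ n = (ψ/2)^n * γ ^ n := by
      rw [← mul_pow]; ring_nf
    have hps : γ ^ (n + s - 1 : ℕ) = γ ^ n * γ ^ (s - 1 : ℕ) := by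
      rw [← pow_add]
      congr 1
      omega
    rw [hrw, hexp, hps]
    simp only [hFdef, hcdef, hpow]
    ring
  -- integrability of the model function
  have key : ∀ n : ℕ, IntegrableOn
      (fun γ : ℝ => γ ^ (((n:ℝ) + s) - 1) * Real.exp (-(b * γ))) (Ioi 0) := by
    intro n
    have h1 : (-1:ℝ) < ((n:ℝ) + s) - 1 := by
      have := hpos n; linarith
    have := integrableOn_rpow_mul_exp_neg_mul_rpow (p := 1) h1 one_pos hb
    refine this.congr_fun (fun x _ => ?_) measurableSet_Ioi
    simp only [Real.rpow_one, neg_mul]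
  have hint : ∀ n : ℕ, IntegrableOn (F n) (Ioi 0) := by
    intro n
    have h1 : IntegrableOn (fun x : ℝ => c n * (x ^ (((n:ℝ) + s) - 1) * Real.exp (-(b * x))))
        (Ioi 0) := (key n).const_mul (c n)
    exact h1.congr_fun (fun x hx => hFeq n x hx) measurableSet_Ioi
  -- value of each integral
  have hGam : ∀ n : ℕ, Real.Gamma ((n:ℝ) + s) = ((n + s - 1).factorial : ℝ) := by
    intro n
    have h1 : ((n:ℝ) + s) = ((n + s - 1 : ℕ) : ℝ) + 1 := by
      have := hcast n; linarith
    rw [h1, Real.Gamma_nat_eq_factorial]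
  have hchoose : ∀ n : ℕ, ((n + s - 1).factorial : ℝ) =
      ((n + s - 1).choose n : ℝ) * n.factorial * ((s-1).factorial : ℝ) := by
    intro n
    have h1 : n ≤ n + s - 1 := by omega
    have := Nat.choose_mul_factorial_mul_factorial h1
    have h2 : n + s - 1 - n = s - 1 := by omega
    rw [h2] at this
    exact_mod_cast this.symm
  have hGs : Real.Gamma (s:ℝ) = ((s-1).factorial : ℝ) := by
    have h1 : (s:ℝ) = ((s - 1 : ℕ) : ℝ) + 1 := by
      have : (1:ℕ) ≤ s := hs
      push_cast [Nat.cast_sub this]; ring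
    rw [h1, Real.Gamma_nat_eq_factorial]
  have hval : ∀ n : ℕ, ∫ γ in Ioi (0:ℝ), F n γ =
      (1 + ψ * γb / 2) ^ (-(s : ℤ)) *
        (((n + s - 1).choose n : ℝ) * (ψ * γb / (ψ * γb + 2)) ^ n * R n) := by
    intro n
    rw [setIntegral_congr_fun measurableSet_Ioi (fun x hx => (hFeq n x hx).symm),
      integral_const_mul, integral_rpow_mul_exp_neg_mul_Ioi (hpos n) hb]
    -- convert rpow to npow
    have h1b : (0:ℝ) < 1/b := by positivity
    have hrp : (1/b) ^ ((n:ℝ) + s) = (1/b) ^ (n + s : ℕ) := by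
      rw [show ((n:ℝ) + s) = ((n + s : ℕ) : ℝ) by push_cast; ring, Real.rpow_natCast]
    rw [hrp, hGam n, hcdef]
    -- zpow prefactor
    have hzp : (1 + ψ * γb / 2) ^ (-(s : ℤ)) = (2 / (ψ * γb + 2)) ^ s := by
      have h2 : (1 + ψ * γb / 2) = (ψ * γb + 2) / 2 := by ring
      rw [h2, zpow_neg, zpow_natCast, ← inv_pow, inv_div]
    rw [hzp]
    have hbinv : 1/b = 2 * γb / (ψ * γb + 2) := by
      rw [hbdef]
      field_simp
    rw [hbinv, pow_add]
    have e1 : (2 * γb / (ψ * γb + 2)) ^ n = ((ψ * γb / (ψ * γb + 2)) / (ψ/2)) ^ n := by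
      congr 1
      field_simp
    have e2 : (2 * γb / (ψ * γb + 2)) ^ s = (2 / (ψ * γb + 2)) ^ s * γb ^ s := by
      rw [← mul_pow]
      congr 1
      ring
    rw [e1, e2, hchoose n, hGs, div_pow]
    have hψ2 : (ψ/2) ^ n ≠ 0 := by positivity
    have hγbs : γb ^ s ≠ 0 := by positivity
    have hfs : ((s-1).factorial : ℝ) ≠ 0 := by positivity
    have hfn : ((n).factorial : ℝ) ≠ 0 := by positivity
    field_simp
  -- summability of the closed-form series
  have hsumC : Summable (fun n : ℕ => ((n + s - 1).choose n : ℝ) * (ψ * γb / (ψ * γb + 2)) ^ n) := by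
    have hnorm : ‖ψ * γb / (ψ * γb + 2)‖ < 1 := by
      rw [Real.norm_eq_abs, abs_of_nonneg hq0]; exact hq1
    have := summable_choose_mul_geometric_of_norm_lt_one (s-1) hnorm
    apply this.congr
    intro n
    congr 2
    have h1 : n + s - 1 = n + (s - 1) := by omega
    have h2 : (n + (s-1)).choose n = (n + (s-1)).choose (s-1) := by
      have h3 := Nat.choose_symm (Nat.le_add_left (s-1) n)
      simpa using h3
    rw [h1, h2]
  have hsumT : Summable (fun n : ℕ =>
      ((n + s - 1).choose n : ℝ) * (ψ * γb / (ψ * γb + 2)) ^ n * R n) := by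
    apply Summable.of_nonneg_of_le _ _ hsumC
    · intro n
      have := hR0 n
      positivity
    · intro n
      have h1 : ((n + s - 1).choose n : ℝ) * (ψ * γb / (ψ * γb + 2)) ^ n * R n ≤
          ((n + s - 1).choose n : ℝ) * (ψ * γb / (ψ * γb + 2)) ^ n * 1 := by
        apply mul_le_mul_of_nonneg_left (hR1 n)
        positivity
      simpa using h1
  -- norms of integrals
  have hFnonneg : ∀ n : ℕ, ∀ γ ∈ Ioi (0:ℝ), 0 ≤ F n γ := by
    intro n γ hγ
    have hγ0 : (0:ℝ) < γ := hγ
    have hRn := hR0 n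
    have hGs' : (0:ℝ) < Real.Gamma s := Real.Gamma_pos_of_pos (by exact_mod_cast hs)
    rw [hFdef]
    positivity
  have hnormint : ∀ n : ℕ, (∫ γ in Ioi (0:ℝ), ‖F n γ‖) = ∫ γ in Ioi (0:ℝ), F n γ := by
    intro n
    exact setIntegral_congr_fun measurableSet_Ioi
      (fun x hx => Real.norm_of_nonneg (hFnonneg n x hx))
  have hnormsum : Summable (fun n : ℕ => ∫ γ in Ioi (0:ℝ), ‖F n γ‖) := by
    simp_rw [hnormint]
    apply Summable.congr (hsumT.mul_left ((1 + ψ * γb / 2) ^ (-(s : ℤ))))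
    intro n
    exact (hval n).symm
  -- interchange
  have hinterchange := integral_tsum_of_summable_integral_norm
    (μ := volume.restrict (Ioi (0:ℝ))) (F := F) hint hnormsum
  calc (∫ γ in Set.Ioi (0 : ℝ),
        (∑' n : ℕ, ((ψ * γ / 2) ^ n * Real.exp (-(ψ * γ / 2)) / n.factorial) *
            (upperGamma (n + K) (lam / 2) / Real.Gamma (n + K))) *
          (γ ^ (s - 1) * Real.exp (-γ / γb) / (γb ^ s * Real.Gamma s)))
      = ∫ γ in Set.Ioi (0 : ℝ), ∑' n : ℕ, F n γ := by
        apply setIntegral_congr_fun measurableSet_Ioi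
        intro γ _
        rw [hFdef]
        exact (tsum_mul_right).symm
    _ = ∑' n : ℕ, ∫ γ in Ioi (0:ℝ), F n γ := hinterchange.symm
    _ = ∑' n : ℕ, (1 + ψ * γb / 2) ^ (-(s : ℤ)) *
          (((n + s - 1).choose n : ℝ) * (ψ * γb / (ψ * γb + 2)) ^ n * R n) :=
        tsum_congr hval
    _ = (1 + ψ * γb / 2) ^ (-(s : ℤ)) *
          ∑' n : ℕ, ((n + s - 1).choose n : ℝ) * (ψ * γb / (ψ * γb + 2)) ^ n * R n :=
        tsum_mul_left
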